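/- arXiv:2010.07899 — 4 statements merged into one kernel-verified Lean document; each statement's English description precedes it below -/
import Mathlib

section
/- Let h : P → Set (Δτ × P) be the transition function of the SPC labelled transition system, i.e. (δ, q) ∈ h(p) iff p →δ q. Define η(p) = {(τ, p)}, define the Kleisli composition (g ⋄ f)(p) = {(δ, r) | ∃ q, (τ, q) ∈ f(p) ∧ (δ, r) ∈ g(q)} ∪ {(δ, r) | ∃ q, (δ, q) ∈ f(p) ∧ (τ, r) ∈ g(q)}, define (η ∨ h)(p) = η(p) ∪ h(p), powers by (η ∨ h)^0 = η and (η ∨ h)^{n+1} = (η ∨ h)^n ⋄ (η ∨ h), and the saturation h⋆(p) = ⋃_{n∈ℕ} (η ∨ h)^n(p). Then for all processes p, q and all δ ∈ Δτ: (δ, q) ∈ h⋆(p) if and only if p ⇒δ q, i.e. the saturation coincides with the standard weak transition relation. -/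
/-- Labels `Δτ = Δ ∪ Δ̄ ∪ {τ}`: actions, coactions and the internal action `τ`. -/
inductive Lab (Δ : Type) : Type
  | act : Δ → Lab Δ
  | coact : Δ → Lab Δ
  | tau : Lab Δ

/-- Processes of the simple process calculus SPC:
`p ::= 0 | δ.p | p ∥ q | p + q`. -/
inductive Proc (Δ : Type) : Type
  | nil : Proc Δ
  | pre : Lab Δ → Proc Δ → Proc Δ
  | par : Proc Δ → Proc Δ → Proc Δ
  | choice : Proc Δ → Proc Δ → Proc Δ

/-- The labelled transition system of SPC. -/
inductive Step {Δ : Type} : Proc Δ → Lab Δ → Proc Δ → Prop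
  | pre (δ : Lab Δ) (p : Proc Δ) : Step (.pre δ p) δ p
  | choiceL {p p' q : Proc Δ} {δ : Lab Δ} : Step p δ p' → Step (.choice p q) δ p'
  | choiceR {p q q' : Proc Δ} {δ : Lab Δ} : Step q δ q' → Step (.choice p q) δ q'
  | parL {p p' q : Proc Δ} {δ : Lab Δ} : Step p δ p' → Step (.par p q) δ (.par p' q)
  | parR {p q q' : Proc Δ} {δ : Lab Δ} : Step q δ q' → Step (.par p q) δ (.par p q')
  | syn {p p' q q' : Proc Δ} {a : Δ} :
      Step p (.act a) p' → Step q (.coact a) q' → Step (.par p q) .tau (.par p' q')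

/-- `p ⇒ q`: the reflexive–transitive closure of `→τ`, for an arbitrary
labelled transition relation `step`. -/
def TauStar {Δ P : Type} (step : P → Lab Δ → P → Prop) : P → P → Prop :=
  Relation.ReflTransGen (fun p q => step p Lab.tau q)

/-- The weak transition relation `p ⇒δ q`: for `δ = τ` it is `p ⇒ q`,
otherwise `p ⇒ p' →δ q' ⇒ q`. -/
def WStep {Δ P : Type} (step : P → Lab Δ → P → Prop) (p : P) (δ : Lab Δ) (q : P) : Prop :=
  (δ = Lab.tau ∧ TauStar step p q) ∨
  (δ ≠ Lab.tau ∧ ∃ p' q', TauStar step p p' ∧ step p' δ q' ∧ TauStar step q' q)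

/-- A relation `R` is a weak bisimulation if every step from one side is matched
by a weak step from the other side, ending in `R`-related states. -/
def IsWeakBisim {Δ P : Type} (step : P → Lab Δ → P → Prop) (R : P → P → Prop) : Prop :=
  ∀ p q, R p q →
    (∀ δ p', step p δ p' → ∃ q', WStep step q δ q' ∧ R p' q') ∧
    (∀ δ q', step q δ q' → ∃ p', WStep step p δ p' ∧ R p' q')

/-- Weak bisimilarity `p ≈ q`: `p` and `q` are related by some weak bisimulation. -/
def WBisim {Δ P : Type} (step : P → Lab Δ → P → Prop) (p q : P) : Prop :=
  ∃ R, IsWeakBisim step R ∧ R p q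

/-- The unit of the monad `𝒫c(Δτ × Id)`: `η(p) = {(τ, p)}`. -/
def eta {Δ : Type} (p : Proc Δ) : Set (Lab Δ × Proc Δ) := {(Lab.tau, p)}

/-- Kleisli composition for the monad `𝒫c(Δτ × Id)`:
`(g ⋄ f)(p) = {(δ, r) | ∃ q, (τ, q) ∈ f p ∧ (δ, r) ∈ g q} ∪
             {(δ, r) | ∃ q, (δ, q) ∈ f p ∧ (τ, r) ∈ g q}`. -/
def kcomp {Δ : Type} (g f : Proc Δ → Set (Lab Δ × Proc Δ)) (p : Proc Δ) :
    Set (Lab Δ × Proc Δ) :=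
  {x | ∃ q, (Lab.tau, q) ∈ f p ∧ x ∈ g q} ∪
  {x | ∃ q, (x.1, q) ∈ f p ∧ (Lab.tau, x.2) ∈ g q}

/-- `(η ∨ h)(p) = η(p) ∪ h(p)`. -/
def vee {Δ : Type} (h : Proc Δ → Set (Lab Δ × Proc Δ)) (p : Proc Δ) :
    Set (Lab Δ × Proc Δ) :=
  eta p ∪ h p

/-- Powers: `(η ∨ h)^0 = η` and `(η ∨ h)^{n+1} = (η ∨ h)^n ⋄ (η ∨ h)`. -/
def pow {Δ : Type} (h : Proc Δ → Set (Lab Δ × Proc Δ)) :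
    ℕ → Proc Δ → Set (Lab Δ × Proc Δ)
  | 0 => eta
  | n + 1 => kcomp (pow h n) (vee h)

/-- The saturation `h⋆(p) = ⋃_{n ∈ ℕ} (η ∨ h)^n(p)`. -/
def sat {Δ : Type} (h : Proc Δ → Set (Lab Δ × Proc Δ)) (p : Proc Δ) :
    Set (Lab Δ × Proc Δ) :=
  ⋃ n : ℕ, pow h n p


section Aux
variable {Δ : Type}

abbrev H (Δ : Type) : Proc Δ → Set (Lab Δ × Proc Δ) := fun r => {x | Step r x.1 x.2}

lemma wstep_tau {p q : Proc Δ} (h : TauStar Step p q) : WStep Step p Lab.tau q :=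
  Or.inl ⟨rfl, h⟩

lemma tauStar_of_wtau {p q : Proc Δ} (h : WStep Step p Lab.tau q) : TauStar Step p q := by
  rcases h with ⟨_, h⟩ | ⟨hne, _⟩
  · exact h
  · exact absurd rfl hne

lemma wstep_head {p r q : Proc Δ} {δ : Lab Δ} (hs : Step p Lab.tau r)
    (h : WStep Step r δ q) : WStep Step p δ q := by
  rcases h with ⟨h1, h2⟩ | ⟨hne, p', q', h1, h2, h3⟩
  · exact Or.inl ⟨h1, Relation.ReflTransGen.head hs h2⟩
  · exact Or.inr ⟨hne, p', q', Relation.ReflTransGen.head hs h1, h2, h3⟩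

lemma wstep_of_step_tauStar {p r q : Proc Δ} {δ : Lab Δ} (hs : Step p δ r)
    (h : TauStar Step r q) : WStep Step p δ q := by
  by_cases hδ : δ = Lab.tau
  · subst hδ; exact Or.inl ⟨rfl, Relation.ReflTransGen.head hs h⟩
  · exact Or.inr ⟨hδ, p, r, Relation.ReflTransGen.refl, hs, h⟩

lemma pow_weak : ∀ n (p q : Proc Δ) (δ : Lab Δ),
    (δ, q) ∈ pow (H Δ) n p → WStep Step p δ q := by
  intro n
  induction n with
  | zero =>
    intro p q δ h
    simp only [pow, eta, Set.mem_singleton_iff, Prod.mk.injEq] at h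
    obtain ⟨rfl, rfl⟩ := h
    exact wstep_tau Relation.ReflTransGen.refl
  | succ n ih =>
    intro p q δ h
    rcases h with ⟨r, hr, hq⟩ | ⟨r, hr, hq⟩
    · rcases hr with hr | hr
      · simp only [eta, Set.mem_singleton_iff, Prod.mk.injEq] at hr
        obtain ⟨-, rfl⟩ := hr
        exact ih _ q δ hq
      · exact wstep_head hr (ih r q δ hq)
    · have htau : TauStar Step r q := tauStar_of_wtau (ih r q Lab.tau hq)
      rcases hr with hr | hr
      · simp only [eta, Set.mem_singleton_iff, Prod.mk.injEq] at hr
        obtain ⟨rfl, rfl⟩ := hr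
        exact wstep_tau htau
      · exact wstep_of_step_tauStar hr htau

lemma eta_mem (p : Proc Δ) : (Lab.tau, p) ∈ pow (H Δ) 0 p := rfl

lemma pow_head {p r q : Proc Δ} {δ : Lab Δ} {n : ℕ} (hs : Step p Lab.tau r)
    (h : (δ, q) ∈ pow (H Δ) n r) : (δ, q) ∈ pow (H Δ) (n + 1) p :=
  Or.inl ⟨r, Or.inr hs, h⟩

lemma pow_tail {q q' : Proc Δ} (hs : Step q Lab.tau q') :
    ∀ (n : ℕ) (p : Proc Δ) (δ : Lab Δ), (δ, q) ∈ pow (H Δ) n p →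
      (δ, q') ∈ pow (H Δ) (n + 1) p := by
  intro n
  induction n with
  | zero =>
    intro p δ h
    simp only [pow, eta, Set.mem_singleton_iff, Prod.mk.injEq] at h
    obtain ⟨rfl, rfl⟩ := h
    exact Or.inl ⟨q', Or.inr hs, rfl⟩
  | succ n ih =>
    intro p δ h
    rcases h with ⟨r, hr, hq⟩ | ⟨r, hr, hq⟩
    · exact Or.inl ⟨r, hr, ih r δ hq⟩
    · exact Or.inr ⟨r, hr, ih r Lab.tau hq⟩

lemma sat_of_tauStar {p q : Proc Δ} (h : TauStar Step p q) :
    (Lab.tau, q) ∈ sat (H Δ) p := by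
  induction h using Relation.ReflTransGen.head_induction_on with
  | refl => exact Set.mem_iUnion.2 ⟨0, eta_mem q⟩
  | head hs _ ih =>
    obtain ⟨n, hn⟩ := Set.mem_iUnion.1 ih
    exact Set.mem_iUnion.2 ⟨n + 1, pow_head hs hn⟩

lemma sat_head_star {p p' q : Proc Δ} {δ : Lab Δ} (h : TauStar Step p p')
    (hq : (δ, q) ∈ sat (H Δ) p') : (δ, q) ∈ sat (H Δ) p := by
  induction h using Relation.ReflTransGen.head_induction_on with
  | refl => exact hq
  | head hs _ ih =>
    obtain ⟨n, hn⟩ := Set.mem_iUnion.1 ih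
    exact Set.mem_iUnion.2 ⟨n + 1, pow_head hs hn⟩

lemma sat_tail_star {p q q' : Proc Δ} {δ : Lab Δ} (hq : (δ, q) ∈ sat (H Δ) p)
    (h : TauStar Step q q') : (δ, q') ∈ sat (H Δ) p := by
  induction h with
  | refl => exact hq
  | tail _ hs ih =>
    obtain ⟨n, hn⟩ := Set.mem_iUnion.1 ih
    exact Set.mem_iUnion.2 ⟨n + 1, pow_tail hs n p δ hn⟩

lemma sat_of_step {p q : Proc Δ} {δ : Lab Δ} (hs : Step p δ q) :
    (δ, q) ∈ sat (H Δ) p :=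
  Set.mem_iUnion.2 ⟨1, Or.inr ⟨q, Or.inr hs, rfl⟩⟩

end Aux

/-- The saturation of the SPC transition function coincides with the standard
weak transition relation: `(δ, q) ∈ h⋆(p) ↔ p ⇒δ q`. -/
theorem sat_eq_weak (Δ : Type) (p q : Proc Δ) (δ : Lab Δ) :
    (δ, q) ∈ sat (fun r => {x | Step r x.1 x.2}) p ↔ WStep Step p δ q := by
  constructor
  · intro h
    obtain ⟨n, hn⟩ := Set.mem_iUnion.1 h
    exact pow_weak n p q δ hn
  · intro h
    rcases h with ⟨rfl, h⟩ | ⟨hne, p', q', h1, h2, h3⟩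
    · exact sat_of_tauStar h
    · exact sat_head_star h1 (sat_tail_star (sat_of_step h2) h3)
end

section
/- In SPC extended with the unary operator ⌊·⌋ with rules pos and neg (for fixed visible actions a, b ∈ Δ), weak bisimilarity fails to be a congruence for ⌊·⌋: τ.a.0 ≈ a.0, but ⌊τ.a.0⌋ ≉ ⌊a.0⌋. -/
/-- Processes of SPC extended with the unary operator `⌊·⌋`:
`p ::= 0 | δ.p | p ∥ q | p + q | ⌊p⌋`. -/
inductive FProc (Δ : Type) : Type
  | nil : FProc Δ
  | pre : Lab Δ → FProc Δ → FProc Δ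
  | par : FProc Δ → FProc Δ → FProc Δ
  | choice : FProc Δ → FProc Δ → FProc Δ
  | floor : FProc Δ → FProc Δ

/-- The transition function of SPC extended with `⌊·⌋` subject to the rules
(pos): `p →τ p'` implies `⌊p⌋ →τ ⌊p'⌋`, and
(neg): if `p` has no `a`-transition then `⌊p⌋ →b 0`.
It is defined by recursion on terms, the transitions of `⌊p⌋` being determined
by those of `p`. -/
def ftrans {Δ : Type} (a b : Δ) : FProc Δ → Set (Lab Δ × FProc Δ)
  | .nil => ∅
  | .pre δ p => {(δ, p)}
  | .par p q =>
      {x | ∃ δ p', (δ, p') ∈ ftrans a b p ∧ x = (δ, FProc.par p' q)} ∪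
      {x | ∃ δ q', (δ, q') ∈ ftrans a b q ∧ x = (δ, FProc.par p q')} ∪
      {x | ∃ c p' q', (Lab.act c, p') ∈ ftrans a b p ∧ (Lab.coact c, q') ∈ ftrans a b q ∧
            x = (Lab.tau, FProc.par p' q')}
  | .choice p q => ftrans a b p ∪ ftrans a b q
  | .floor p =>
      {x | ∃ p', (Lab.tau, p') ∈ ftrans a b p ∧ x = (Lab.tau, FProc.floor p')} ∪
      {x | (∀ p', (Lab.act a, p') ∉ ftrans a b p) ∧ x = (Lab.act b, FProc.nil)}

/-- With the rules pos and neg, weak bisimilarity fails to be a congruence for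
`⌊·⌋`: `τ.a.0 ≈ a.0` but `⌊τ.a.0⌋ ≉ ⌊a.0⌋`. -/
theorem floor_neg_not_congruence (Δ : Type) (a b : Δ) :
    WBisim (fun p δ q => (δ, q) ∈ ftrans a b p)
      (FProc.pre Lab.tau (FProc.pre (Lab.act a) FProc.nil))
      (FProc.pre (Lab.act a) FProc.nil) ∧
    ¬ WBisim (fun p δ q => (δ, q) ∈ ftrans a b p)
      (FProc.floor (FProc.pre Lab.tau (FProc.pre (Lab.act a) FProc.nil)))
      (FProc.floor (FProc.pre (Lab.act a) FProc.nil)) := by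
  classical
  set A0 : FProc Δ := FProc.pre (Lab.act a) FProc.nil with hA0
  set TA : FProc Δ := FProc.pre Lab.tau A0 with hTA
  have hstepA0 : ∀ δ (q : FProc Δ), (δ, q) ∈ ftrans a b A0 ↔ δ = Lab.act a ∧ q = FProc.nil := by
    intro δ q; simp [ftrans, hA0, Prod.ext_iff]
  have hstepTA : ∀ δ (q : FProc Δ), (δ, q) ∈ ftrans a b TA ↔ δ = Lab.tau ∧ q = A0 := by
    intro δ q; simp [ftrans, hTA, Prod.ext_iff]
  constructor
  · refine ⟨fun p q => (p = TA ∧ q = A0) ∨ (p = A0 ∧ q = A0) ∨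
      (p = FProc.nil ∧ q = FProc.nil), ?_, Or.inl ⟨rfl, rfl⟩⟩
    intro p q hpq
    rcases hpq with ⟨hp, hq⟩ | ⟨hp, hq⟩ | ⟨hp, hq⟩ <;> subst hp <;> subst hq
    · constructor
      · intro δ p' h
        rw [hstepTA] at h
        obtain ⟨rfl, rfl⟩ := h
        exact ⟨A0, Or.inl ⟨rfl, Relation.ReflTransGen.refl⟩, Or.inr (Or.inl ⟨rfl, rfl⟩)⟩
      · intro δ q' h
        rw [hstepA0] at h
        obtain ⟨rfl, rfl⟩ := h
        refine ⟨FProc.nil, Or.inr ⟨by simp, A0, FProc.nil,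
          Relation.ReflTransGen.single ((hstepTA _ _).2 ⟨rfl, rfl⟩),
          (hstepA0 _ _).2 ⟨rfl, rfl⟩, Relation.ReflTransGen.refl⟩,
          Or.inr (Or.inr ⟨rfl, rfl⟩)⟩
    · constructor
      · intro δ p' h
        rw [hstepA0] at h
        obtain ⟨rfl, rfl⟩ := h
        exact ⟨FProc.nil, Or.inr ⟨by simp, A0, FProc.nil, Relation.ReflTransGen.refl,
          (hstepA0 _ _).2 ⟨rfl, rfl⟩, Relation.ReflTransGen.refl⟩, Or.inr (Or.inr ⟨rfl, rfl⟩)⟩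
      · intro δ q' h
        rw [hstepA0] at h
        obtain ⟨rfl, rfl⟩ := h
        exact ⟨FProc.nil, Or.inr ⟨by simp, A0, FProc.nil, Relation.ReflTransGen.refl,
          (hstepA0 _ _).2 ⟨rfl, rfl⟩, Relation.ReflTransGen.refl⟩, Or.inr (Or.inr ⟨rfl, rfl⟩)⟩
    · exact ⟨fun δ p' h => absurd h (by simp [ftrans]),
        fun δ q' h => absurd h (by simp [ftrans])⟩
  · rintro ⟨R, hR, hRel⟩
    -- ⌊A0⌋ has no transitions
    have hFA : ∀ δ (q : FProc Δ), (δ, q) ∉ ftrans a b (FProc.floor A0) := by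
      intro δ q h
      rcases h with ⟨p', hp', hx⟩ | ⟨hno, hx⟩
      · rw [hstepA0] at hp'; exact nomatch hp'.1
      · exact hno FProc.nil ((hstepA0 _ _).2 ⟨rfl, rfl⟩)
    have hTS : ∀ x : FProc Δ, TauStar (fun p δ q => (δ, q) ∈ ftrans a b p)
        (FProc.floor A0) x → x = FProc.floor A0 := by
      intro x h
      induction h with
      | refl => rfl
      | tail h1 h2 ih => subst ih; exact absurd h2 (hFA _ _)
    -- ⌊TA⌋ →b 0
    have hb : (Lab.act b, FProc.nil) ∈ ftrans a b (FProc.floor TA) := by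
      refine Or.inr ⟨?_, rfl⟩
      intro p' hp'
      rw [hstepTA] at hp'
      exact nomatch hp'.1
    obtain ⟨q', hw, _⟩ := (hR _ _ hRel).1 (Lab.act b) FProc.nil hb
    rcases hw with ⟨h1, _⟩ | ⟨_, p', q'', h1, h2, _⟩
    · exact nomatch h1
    · have := hTS _ h1
      subst this
      exact hFA _ _ h2
end

section
/- In SPC extended with the unary operator ⌊·⌋ with the patience rule pat and the non-straight rule cur (for fixed distinct visible actions a, b, c ∈ Δ), weak bisimilarity fails to be a congruence for ⌊·⌋: a.0 + b.0 + τ.b.0 ≈ a.0 + τ.b.0, but ⌊a.0 + b.0 + τ.b.0⌋ ≉ ⌊a.0 + τ.b.0⌋. -/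
/-- The LTS of SPC extended with `⌊·⌋` subject to the patience rule
(pat): `p →τ p'` implies `⌊p⌋ →τ ⌊p'⌋`, and the non-straight rule
(cur): `p →a q` and `p →b w` imply `⌊p⌋ →c ⌊q⌋`,
for fixed visible actions `a`, `b`, `c`. -/
inductive FStep {Δ : Type} (a b c : Δ) : FProc Δ → Lab Δ → FProc Δ → Prop
  | pre (δ : Lab Δ) (p : FProc Δ) : FStep a b c (.pre δ p) δ p
  | choiceL {p p' q : FProc Δ} {δ : Lab Δ} :
      FStep a b c p δ p' → FStep a b c (.choice p q) δ p'
  | choiceR {p q q' : FProc Δ} {δ : Lab Δ} :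
      FStep a b c q δ q' → FStep a b c (.choice p q) δ q'
  | parL {p p' q : FProc Δ} {δ : Lab Δ} :
      FStep a b c p δ p' → FStep a b c (.par p q) δ (.par p' q)
  | parR {p q q' : FProc Δ} {δ : Lab Δ} :
      FStep a b c q δ q' → FStep a b c (.par p q) δ (.par p q')
  | syn {p p' q q' : FProc Δ} {d : Δ} :
      FStep a b c p (.act d) p' → FStep a b c q (.coact d) q' →
      FStep a b c (.par p q) .tau (.par p' q')
  | pat {p p' : FProc Δ} : FStep a b c p .tau p' → FStep a b c (.floor p) .tau (.floor p')
  | cur {p q w : FProc Δ} :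
      FStep a b c p (.act a) q → FStep a b c p (.act b) w →
      FStep a b c (.floor p) (.act c) (.floor q)

section Aux
variable {Δ : Type} (a b c : Δ)

/-- The process `b.0`. -/
private def Bp (b : Δ) : FProc Δ := FProc.pre (Lab.act b) FProc.nil
/-- `Q = a.0 + τ.b.0`. -/
private def Qp (a b : Δ) : FProc Δ :=
  FProc.choice (FProc.pre (Lab.act a) FProc.nil) (FProc.pre Lab.tau (Bp b))
/-- `P = (a.0 + b.0) + τ.b.0`. -/
private def Pp (a b : Δ) : FProc Δ :=
  FProc.choice (FProc.choice (FProc.pre (Lab.act a) FProc.nil) (Bp b))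
    (FProc.pre Lab.tau (Bp b))

private lemma q_tau_only {x : FProc Δ} (h : FStep a b c (Qp a b) Lab.tau x) :
    x = Bp b := by
  cases h with
  | choiceL h => cases h
  | choiceR h => cases h; rfl

private lemma floorQ_tau {x : FProc Δ}
    (h : FStep a b c (FProc.floor (Qp a b)) Lab.tau x) :
    x = FProc.floor (Bp b) := by
  cases h with
  | pat h => rw [q_tau_only a b c h]

private lemma floorB_tau {x : FProc Δ}
    (h : FStep a b c (FProc.floor (Bp b)) Lab.tau x) : False := by
  cases h with
  | pat h => cases h

private lemma floorQ_reach {x : FProc Δ}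
    (h : TauStar (FStep a b c) (FProc.floor (Qp a b)) x) :
    x = FProc.floor (Qp a b) ∨ x = FProc.floor (Bp b) := by
  induction h with
  | refl => exact Or.inl rfl
  | tail _ hstep ih =>
    rcases ih with rfl | rfl
    · exact Or.inr (floorQ_tau a b c hstep)
    · exact absurd hstep (fun h => floorB_tau a b c h)

private lemma floorQ_no_c (hab : a ≠ b) {x : FProc Δ}
    (h : FStep a b c (FProc.floor (Qp a b)) (Lab.act c) x) : False := by
  cases h with
  | cur h1 h2 =>
    cases h2 with
    | choiceL h2 => cases h2; exact hab rfl
    | choiceR h2 => cases h2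

private lemma floorB_no_c (hab : a ≠ b) {x : FProc Δ}
    (h : FStep a b c (FProc.floor (Bp b)) (Lab.act c) x) : False := by
  cases h with
  | cur h1 h2 => cases h1; exact hab rfl

end Aux

/-- With rules pat and cur (for distinct visible actions `a`, `b`, `c`), weak
bisimilarity fails to be a congruence for `⌊·⌋`:
`a.0 + b.0 + τ.b.0 ≈ a.0 + τ.b.0` but `⌊a.0 + b.0 + τ.b.0⌋ ≉ ⌊a.0 + τ.b.0⌋`. -/
theorem floor_cur_not_congruence (Δ : Type) (a b c : Δ)
    (hab : a ≠ b) (hac : a ≠ c) (hbc : b ≠ c) :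
    WBisim (FStep a b c)
      (FProc.choice
        (FProc.choice (FProc.pre (Lab.act a) FProc.nil) (FProc.pre (Lab.act b) FProc.nil))
        (FProc.pre Lab.tau (FProc.pre (Lab.act b) FProc.nil)))
      (FProc.choice (FProc.pre (Lab.act a) FProc.nil)
        (FProc.pre Lab.tau (FProc.pre (Lab.act b) FProc.nil))) ∧
    ¬ WBisim (FStep a b c)
      (FProc.floor (FProc.choice
        (FProc.choice (FProc.pre (Lab.act a) FProc.nil) (FProc.pre (Lab.act b) FProc.nil))
        (FProc.pre Lab.tau (FProc.pre (Lab.act b) FProc.nil))))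
      (FProc.floor (FProc.choice (FProc.pre (Lab.act a) FProc.nil)
        (FProc.pre Lab.tau (FProc.pre (Lab.act b) FProc.nil)))) := by
  constructor
  · -- weak bisimilarity of P and Q
    refine ⟨fun p q =>
      (p = Pp a b ∧ q = Qp a b) ∨ (p = FProc.nil ∧ q = FProc.nil) ∨
      (p = Bp b ∧ q = Bp b), fun p q hpq => ?_, Or.inl ⟨rfl, rfl⟩⟩
    have wtau : ∀ r : FProc Δ, WStep (FStep a b c) r Lab.tau r :=
      fun r => Or.inl ⟨rfl, Relation.ReflTransGen.refl⟩
    have wone : ∀ (r s : FProc Δ) (d : Δ), FStep a b c r (Lab.act d) s →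
        WStep (FStep a b c) r (Lab.act d) s := fun r s d h =>
      Or.inr ⟨fun h' => (nomatch h'), r, s,
        Relation.ReflTransGen.refl, h, Relation.ReflTransGen.refl⟩
    have wtau1 : ∀ (r s : FProc Δ), FStep a b c r Lab.tau s →
        WStep (FStep a b c) r Lab.tau s := fun r s h =>
      Or.inl ⟨rfl, Relation.ReflTransGen.single h⟩
    rcases hpq with ⟨rfl, rfl⟩ | ⟨rfl, rfl⟩ | ⟨rfl, rfl⟩
    · constructor
      · intro δ p' hstep
        cases hstep with
        | choiceL h =>
          cases h with
          | choiceL h =>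
            cases h
            exact ⟨FProc.nil, wone _ _ _ (FStep.choiceL (FStep.pre _ _)),
              Or.inr (Or.inl ⟨rfl, rfl⟩)⟩
          | choiceR h =>
            cases h
            refine ⟨FProc.nil, Or.inr ⟨fun h' => (nomatch h'), Bp b, FProc.nil,
              Relation.ReflTransGen.single (FStep.choiceR (FStep.pre _ _)),
              FStep.pre _ _, Relation.ReflTransGen.refl⟩,
              Or.inr (Or.inl ⟨rfl, rfl⟩)⟩
        | choiceR h =>
          cases h
          exact ⟨Bp b, wtau1 _ _ (FStep.choiceR (FStep.pre _ _)),
            Or.inr (Or.inr ⟨rfl, rfl⟩)⟩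
      · intro δ q' hstep
        cases hstep with
        | choiceL h =>
          cases h
          exact ⟨FProc.nil, wone _ _ _ (FStep.choiceL (FStep.choiceL (FStep.pre _ _))),
            Or.inr (Or.inl ⟨rfl, rfl⟩)⟩
        | choiceR h =>
          cases h
          exact ⟨Bp b, wtau1 _ _ (FStep.choiceR (FStep.pre _ _)),
            Or.inr (Or.inr ⟨rfl, rfl⟩)⟩
    · constructor
      · intro δ p' hstep
        cases hstep
      · intro δ q' hstep
        cases hstep
    · constructor
      · intro δ p' hstep
        cases hstep
        exact ⟨FProc.nil, wone _ _ _ (FStep.pre _ _), Or.inr (Or.inl ⟨rfl, rfl⟩)⟩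
      · intro δ q' hstep
        cases hstep
        exact ⟨FProc.nil, wone _ _ _ (FStep.pre _ _), Or.inr (Or.inl ⟨rfl, rfl⟩)⟩
  · -- the floors are not weakly bisimilar
    rintro ⟨R, hR, hPQ⟩
    have hc : FStep a b c (FProc.floor (Pp a b)) (Lab.act c)
        (FProc.floor FProc.nil) :=
      FStep.cur (FStep.choiceL (FStep.choiceL (FStep.pre _ _)))
        (FStep.choiceL (FStep.choiceR (FStep.pre _ _)))
    obtain ⟨q', hw, -⟩ := (hR _ _ hPQ).1 _ _ hc
    rcases hw with ⟨h, -⟩ | ⟨-, p', q'', hts, hstep, -⟩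
    · exact nomatch h
    · rcases floorQ_reach a b c hts with rfl | rfl
      · exact floorQ_no_c a b c hab hstep
      · exact floorB_no_c a b c hab hstep
end

section
/- In the SPC labelled transition system, weak bisimilarity is compatible with prefixing and with parallel composition: if P ≈ Q then δ.P ≈ δ.Q for every δ ∈ Δτ, and if P₁ ≈ Q₁ and P₂ ≈ Q₂ then P₁ ∥ P₂ ≈ Q₁ ∥ Q₂. -/
section Aux

variable {Δ : Type}

lemma wbisim_isBisim {P : Type} (step : P → Lab Δ → P → Prop) :
    IsWeakBisim step (WBisim step) := by
  rintro p q ⟨R, hR, hpq⟩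
  obtain ⟨h1, h2⟩ := hR p q hpq
  constructor
  · intro δ p' hp
    obtain ⟨q', hw, hr⟩ := h1 δ p' hp
    exact ⟨q', hw, R, hR, hr⟩
  · intro δ q' hq
    obtain ⟨p', hw, hr⟩ := h2 δ q' hq
    exact ⟨p', hw, R, hR, hr⟩

lemma step_wstep {P : Type} {step : P → Lab Δ → P → Prop} {p q : P} {δ : Lab Δ}
    (h : step p δ q) : WStep step p δ q := by
  by_cases hδ : δ = Lab.tau
  · subst hδ; exact Or.inl ⟨rfl, Relation.ReflTransGen.single h⟩
  · exact Or.inr ⟨hδ, p, q, Relation.ReflTransGen.refl, h, Relation.ReflTransGen.refl⟩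

lemma taustar_parL {p p' q : Proc Δ} (h : TauStar Step p p') :
    TauStar Step (Proc.par p q) (Proc.par p' q) :=
  Relation.ReflTransGen.lift (fun x => Proc.par x q) (fun _ _ s => Step.parL s) _ _ h

lemma taustar_parR {p q q' : Proc Δ} (h : TauStar Step q q') :
    TauStar Step (Proc.par p q) (Proc.par p q') :=
  Relation.ReflTransGen.lift (fun x => Proc.par p x) (fun _ _ s => Step.parR s) _ _ h

lemma wstep_parL {p p' q : Proc Δ} {δ : Lab Δ} (h : WStep Step p δ p') :
    WStep Step (Proc.par p q) δ (Proc.par p' q) := by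
  rcases h with ⟨hδ, ht⟩ | ⟨hδ, a, b, h1, h2, h3⟩
  · exact Or.inl ⟨hδ, taustar_parL ht⟩
  · exact Or.inr ⟨hδ, _, _, taustar_parL h1, Step.parL h2, taustar_parL h3⟩

lemma wstep_parR {p q q' : Proc Δ} {δ : Lab Δ} (h : WStep Step q δ q') :
    WStep Step (Proc.par p q) δ (Proc.par p q') := by
  rcases h with ⟨hδ, ht⟩ | ⟨hδ, a, b, h1, h2, h3⟩
  · exact Or.inl ⟨hδ, taustar_parR ht⟩
  · exact Or.inr ⟨hδ, _, _, taustar_parR h1, Step.parR h2, taustar_parR h3⟩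

lemma wstep_syn {p p' q q' : Proc Δ} {a : Δ}
    (hp : WStep Step p (Lab.act a) p') (hq : WStep Step q (Lab.coact a) q') :
    WStep Step (Proc.par p q) Lab.tau (Proc.par p' q') := by
  rcases hp with ⟨h, _⟩ | ⟨_, p1, p2, hp1, hp2, hp3⟩
  · exact absurd h (by simp)
  rcases hq with ⟨h, _⟩ | ⟨_, q1, q2, hq1, hq2, hq3⟩
  · exact absurd h (by simp)
  refine Or.inl ⟨rfl, ?_⟩
  exact ((taustar_parL hp1).trans (taustar_parR hq1)).trans
    (Relation.ReflTransGen.head (Step.syn hp2 hq2)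
      ((taustar_parL hp3).trans (taustar_parR hq3)))

end Aux

/-- Weak bisimilarity in SPC is compatible with prefixing and with parallel
composition: if `P ≈ Q` then `δ.P ≈ δ.Q`, and if `P₁ ≈ Q₁` and `P₂ ≈ Q₂` then
`P₁ ∥ P₂ ≈ Q₁ ∥ Q₂`. -/

theorem wbisim_compat_pre_par (Δ : Type) :
    (∀ (P Q : Proc Δ) (δ : Lab Δ),
      WBisim Step P Q → WBisim Step (Proc.pre δ P) (Proc.pre δ Q)) ∧
    (∀ P₁ Q₁ P₂ Q₂ : Proc Δ,
      WBisim Step P₁ Q₁ → WBisim Step P₂ Q₂ →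
      WBisim Step (Proc.par P₁ P₂) (Proc.par Q₁ Q₂)) := by
  constructor
  · intro P Q δ hPQ
    refine ⟨fun p q => (p = Proc.pre δ P ∧ q = Proc.pre δ Q) ∨ WBisim Step p q, ?_, Or.inl ⟨rfl, rfl⟩⟩
    rintro p q (⟨rfl, rfl⟩ | hw)
    · constructor
      · intro δ' p' hp
        cases hp
        exact ⟨Q, step_wstep (Step.pre δ Q), Or.inr hPQ⟩
      · intro δ' q' hq
        cases hq
        exact ⟨P, step_wstep (Step.pre δ P), Or.inr hPQ⟩
    · obtain ⟨h1, h2⟩ := wbisim_isBisim Step p q hw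
      constructor
      · intro δ' p' hp
        obtain ⟨q', hws, hr⟩ := h1 δ' p' hp
        exact ⟨q', hws, Or.inr hr⟩
      · intro δ' q' hq
        obtain ⟨p', hws, hr⟩ := h2 δ' q' hq
        exact ⟨p', hws, Or.inr hr⟩
  · intro P₁ Q₁ P₂ Q₂ h1 h2
    refine ⟨fun p q => ∃ p₁ p₂ q₁ q₂, p = Proc.par p₁ p₂ ∧ q = Proc.par q₁ q₂ ∧
      WBisim Step p₁ q₁ ∧ WBisim Step p₂ q₂, ?_, P₁, P₂, Q₁, Q₂, rfl, rfl, h1, h2⟩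
    rintro p q ⟨p₁, p₂, q₁, q₂, rfl, rfl, hb1, hb2⟩
    obtain ⟨h1l, h1r⟩ := wbisim_isBisim Step p₁ q₁ hb1
    obtain ⟨h2l, h2r⟩ := wbisim_isBisim Step p₂ q₂ hb2
    constructor
    · intro δ p' hp
      cases hp with
      | parL hs =>
        obtain ⟨q₁', hws, hr⟩ := h1l _ _ hs
        exact ⟨Proc.par q₁' q₂, wstep_parL hws, _, _, _, _, rfl, rfl, hr, hb2⟩
      | parR hs =>
        obtain ⟨q₂', hws, hr⟩ := h2l _ _ hs
        exact ⟨Proc.par q₁ q₂', wstep_parR hws, _, _, _, _, rfl, rfl, hb1, hr⟩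
      | syn hsa hsb =>
        obtain ⟨q₁', hws1, hr1⟩ := h1l _ _ hsa
        obtain ⟨q₂', hws2, hr2⟩ := h2l _ _ hsb
        exact ⟨Proc.par q₁' q₂', wstep_syn hws1 hws2, _, _, _, _, rfl, rfl, hr1, hr2⟩
    · intro δ q' hq
      cases hq with
      | parL hs =>
        obtain ⟨p₁', hws, hr⟩ := h1r _ _ hs
        exact ⟨Proc.par p₁' p₂, wstep_parL hws, _, _, _, _, rfl, rfl, hr, hb2⟩
      | parR hs =>
        obtain ⟨p₂', hws, hr⟩ := h2r _ _ hs
        exact ⟨Proc.par p₁ p₂', wstep_parR hws, _, _, _, _, rfl, rfl, hb1, hr⟩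
      | syn hsa hsb =>
        obtain ⟨p₁', hws1, hr1⟩ := h1r _ _ hsa
        obtain ⟨p₂', hws2, hr2⟩ := h2r _ _ hsb
        exact ⟨Proc.par p₁' p₂', wstep_syn hws1 hws2, _, _, _, _, rfl, rfl, hr1, hr2⟩
end
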